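/- Let ν_1,…,ν_N ∈ ℂ be pairwise distinct. Then for each j = 1,…,N the vector B(ν_j) B(ν_j − 1) |⇑⟩ is the zero vector of H. -/

import Mathlib

open scoped BigOperators
noncomputable section

namespace SixVertex

/-- A spin configuration of the `N`-site quantum chain: one spin (`0` = up, `1` = down)
at each site. Site `k` of the paper (k = 1,…,N) corresponds to index `k-1 : Fin N`. -/
abbrev Cfg (N : ℕ) := Fin N → Fin 2

/-- Operators on the quantum space `H = (ℂ²)^{⊗N}`, represented as matrices in the
standard (spin-configuration) basis. -/
abbrev Op (N : ℕ) := Matrix (Cfg N) (Cfg N) ℂ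

/-- The operator acting as the 2×2 matrix `M` in the `k`-th tensor factor and as the
identity elsewhere. -/
def siteOp {N : ℕ} (k : Fin N) (M : Matrix (Fin 2) (Fin 2) ℂ) : Op N :=
  Matrix.of fun s s' => if ∀ i, i ≠ k → s i = s' i then M (s k) (s' k) else 0

def piPlus : Matrix (Fin 2) (Fin 2) ℂ := !![1, 0; 0, 0]
def piMinus : Matrix (Fin 2) (Fin 2) ℂ := !![0, 0; 0, 1]
def sigmaPlus : Matrix (Fin 2) (Fin 2) ℂ := !![0, 1; 0, 0]
def sigmaMinus : Matrix (Fin 2) (Fin 2) ℂ := !![0, 0; 1, 0]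

/-- Rational weight `a(λ,ν) = λ - ν + 1`. -/
def aW (l v : ℂ) : ℂ := l - v + 1
/-- Rational weight `b(λ,ν) = λ - ν`. -/
def bW (l v : ℂ) : ℂ := l - v

/-- The L-operator at site `k` (a 2×2 matrix in the auxiliary space, with entries
operators on the quantum space); the weight `c` equals `1`. -/
def Lop {N : ℕ} (ν : Fin N → ℂ) (k : Fin N) (l : ℂ) :
    Matrix (Fin 2) (Fin 2) (Op N) :=
  !![aW l (ν k) • siteOp k piPlus + bW l (ν k) • siteOp k piMinus,
       siteOp k sigmaMinus;
     siteOp k sigmaPlus,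
       bW l (ν k) • siteOp k piPlus + aW l (ν k) • siteOp k piMinus]

/-- The monodromy matrix `T(λ) = L_N(λ,ν_N) ⋯ L_1(λ,ν_1)`. -/
def monodromy {N : ℕ} (ν : Fin N → ℂ) (l : ℂ) :
    Matrix (Fin 2) (Fin 2) (Op N) :=
  (((List.finRange N).reverse).map fun k => Lop ν k l).prod

/-- The operator `A(λ)`. -/
def Aop {N : ℕ} (ν : Fin N → ℂ) (l : ℂ) : Op N := monodromy ν l 0 0
/-- The operator `B(λ)`. -/
def Bop {N : ℕ} (ν : Fin N → ℂ) (l : ℂ) : Op N := monodromy ν l 0 1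
/-- The operator `C(λ)`. -/
def Cop {N : ℕ} (ν : Fin N → ℂ) (l : ℂ) : Op N := monodromy ν l 1 0
/-- The operator `D(λ)`. -/
def Dop {N : ℕ} (ν : Fin N → ℂ) (l : ℂ) : Op N := monodromy ν l 1 1

/-- The all-spins-up configuration. -/
def upCfg (N : ℕ) : Cfg N := fun _ => 0
/-- The all-spins-down configuration. -/
def downCfg (N : ℕ) : Cfg N := fun _ => 1

/-- The basis vector of `H` corresponding to a spin configuration `s`. -/
def basisVec {N : ℕ} (s : Cfg N) : Cfg N → ℂ := Pi.single s 1

/-- The all-spins-up vacuum vector `|⇑⟩`. -/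
def upVec (N : ℕ) : Cfg N → ℂ := basisVec (upCfg N)
/-- The all-spins-down vector `|⇓⟩`. -/
def downVec (N : ℕ) : Cfg N → ℂ := basisVec (downCfg N)

/-- The partition function of the six-vertex model with domain wall boundary conditions:
`Z_N(λ_1,…,λ_N) = ⟨⇓| B(λ_N) ⋯ B(λ_1) |⇑⟩`. -/
def Zfun (N : ℕ) (ν : Fin N → ℂ) (lam : Fin N → ℂ) : ℂ :=
  (((List.finRange N).reverse).map fun j => Bop ν (lam j)).prod (downCfg N) (upCfg N)

end SixVertex
end

noncomputable section
namespace SixVertex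
variable {N : ℕ}

lemma fin2cases (x : Fin 2) : x = 0 ∨ x = 1 := by revert x; decide

lemma siteOp_mul (k : Fin N) (A B : Matrix (Fin 2) (Fin 2) ℂ) :
    siteOp k A * siteOp k B = siteOp k (A * B) := by
  ext s s'
  rw [Matrix.mul_apply]
  by_cases h : ∀ i, i ≠ k → s i = s' i
  · have hne : Function.update s k 0 ≠ Function.update s k 1 := by
      intro hh
      have := congrFun hh k
      simp at this
    rw [show siteOp k (A * B) s s' = (A * B) (s k) (s' k) by
      simp only [siteOp, Matrix.of_apply, if_pos h]]
    rw [Matrix.mul_apply, Fin.sum_univ_two]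
    rw [← Finset.sum_subset (Finset.subset_univ
        ({Function.update s k 0, Function.update s k 1} : Finset (Cfg N)))]
    · rw [Finset.sum_pair hne]
      have key : ∀ c : Fin 2,
          siteOp k A s (Function.update s k c) * siteOp k B (Function.update s k c) s'
            = A (s k) c * B c (s' k) := by
        intro c
        have h1 : ∀ i, i ≠ k → s i = Function.update s k c i := by
          intro i hi; rw [Function.update_of_ne hi]
        have h2 : ∀ i, i ≠ k → Function.update s k c i = s' i := by
          intro i hi; rw [Function.update_of_ne hi]; exact h i hi
        simp only [siteOp, Matrix.of_apply, if_pos h1, if_pos h2, Function.update_self]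
      rw [key 0, key 1]
    · intro t _ ht
      simp only [Finset.mem_insert, Finset.mem_singleton] at ht
      push_neg at ht
      have : ¬ (∀ i, i ≠ k → s i = t i) := by
        intro hc
        rcases fin2cases (t k) with h0 | h0
        · exact ht.1 (funext fun i => by
            by_cases hi : i = k
            · subst hi; rw [Function.update_self, h0]
            · rw [Function.update_of_ne hi]; exact (hc i hi).symm)
        · exact ht.2 (funext fun i => by
            by_cases hi : i = k
            · subst hi; rw [Function.update_self, h0]
            · rw [Function.update_of_ne hi]; exact (hc i hi).symm)
      simp only [siteOp, Matrix.of_apply, if_neg this, zero_mul]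
  · rw [show siteOp k (A * B) s s' = 0 by simp only [siteOp, Matrix.of_apply, if_neg h]]
    apply Finset.sum_eq_zero
    intro t _
    by_cases h1 : ∀ i, i ≠ k → s i = t i
    · by_cases h2 : ∀ i, i ≠ k → t i = s' i
      · exact absurd (fun i hi => (h1 i hi).trans (h2 i hi)) h
      · simp only [siteOp, Matrix.of_apply, if_neg h2, mul_zero]
    · simp only [siteOp, Matrix.of_apply, if_neg h1, zero_mul]

lemma siteOp_mul_apply_ne {i j : Fin N} (hij : i ≠ j) (A B : Matrix (Fin 2) (Fin 2) ℂ)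
    (s s' : Cfg N) :
    (siteOp i A * siteOp j B) s s'
      = if ∀ m, m ≠ i → m ≠ j → s m = s' m then A (s i) (s' i) * B (s j) (s' j) else 0 := by
  rw [Matrix.mul_apply]
  by_cases h : ∀ m, m ≠ i → m ≠ j → s m = s' m
  · rw [if_pos h]
    have hval : siteOp i A s (Function.update s i (s' i))
        * siteOp j B (Function.update s i (s' i)) s' = A (s i) (s' i) * B (s j) (s' j) := by
      have h1 : ∀ m, m ≠ i → s m = Function.update s i (s' i) m := by
        intro m hm; rw [Function.update_of_ne hm]
      have h2 : ∀ m, m ≠ j → Function.update s i (s' i) m = s' m := by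
        intro m hm
        by_cases hmi : m = i
        · subst hmi; rw [Function.update_self]
        · rw [Function.update_of_ne hmi]; exact h m hmi hm
      simp only [siteOp, Matrix.of_apply, if_pos h1, if_pos h2, Function.update_self,
        Function.update_of_ne (Ne.symm hij)]
    rw [Finset.sum_eq_single (Function.update s i (s' i))]
    · exact hval
    · intro t _ ht
      by_cases h1 : ∀ m, m ≠ i → s m = t m
      · by_cases h2 : ∀ m, m ≠ j → t m = s' m
        · exfalso
          apply ht
          funext m
          by_cases hmi : m = i
          · subst hmi; rw [Function.update_self]; exact h2 _ hij
          · rw [Function.update_of_ne hmi]; exact (h1 m hmi).symm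
        · simp only [siteOp, Matrix.of_apply, if_neg h2, mul_zero]
      · simp only [siteOp, Matrix.of_apply, if_neg h1, zero_mul]
    · intro hmem; exact absurd (Finset.mem_univ _) hmem
  · rw [if_neg h]
    apply Finset.sum_eq_zero
    intro t _
    by_cases h1 : ∀ m, m ≠ i → s m = t m
    · by_cases h2 : ∀ m, m ≠ j → t m = s' m
      · exact absurd (fun m hmi hmj => (h1 m hmi).trans (h2 m hmj)) h
      · simp only [siteOp, Matrix.of_apply, if_neg h2, mul_zero]
    · simp only [siteOp, Matrix.of_apply, if_neg h1, zero_mul]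

lemma siteOp_comm {i j : Fin N} (hij : i ≠ j) (A B : Matrix (Fin 2) (Fin 2) ℂ) :
    Commute (siteOp i A) (siteOp j B) := by
  unfold Commute SemiconjBy
  ext s s'
  rw [siteOp_mul_apply_ne hij, siteOp_mul_apply_ne hij.symm]
  by_cases h : ∀ m, m ≠ i → m ≠ j → s m = s' m
  · rw [if_pos h, if_pos (fun m h1 h2 => h m h2 h1), mul_comm]
  · rw [if_neg h, if_neg (fun h' => h (fun m h1 h2 => h' m h2 h1))]



/-- partial monodromy over the first `k` sites -/
def Tk (ν : Fin N → ℂ) (l : ℂ) (k : ℕ) : Matrix (Fin 2) (Fin 2) (Op N) :=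
  ((((List.finRange N).take k).reverse).map fun i => Lop ν i l).prod

/-- partial vacuum eigenvalue of D -/
def Lam (ν : Fin N → ℂ) (l : ℂ) (k : ℕ) : ℂ :=
  (((List.finRange N).take k).map fun i => bW l (ν i)).prod

lemma Tk_zero (ν : Fin N → ℂ) (l : ℂ) : Tk ν l 0 = 1 := by simp [Tk]

lemma Lam_zero (ν : Fin N → ℂ) (l : ℂ) : Lam ν l 0 = 1 := by simp [Lam]

lemma take_succ_finRange {k : ℕ} (hk : k < N) :
    (List.finRange N).take (k + 1) = (List.finRange N).take k ++ [⟨k, hk⟩] := by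
  rw [List.take_succ]
  congr 1
  have hlen : k < (List.finRange N).length := by simpa using hk
  rw [List.getElem?_eq_getElem hlen]
  simp [List.getElem_finRange, Fin.cast_mk]

lemma Tk_succ (ν : Fin N → ℂ) (l : ℂ) {k : ℕ} (hk : k < N) :
    Tk ν l (k + 1) = Lop ν ⟨k, hk⟩ l * Tk ν l k := by
  rw [Tk, take_succ_finRange hk]
  simp [Tk]

lemma Lam_succ (ν : Fin N → ℂ) (l : ℂ) {k : ℕ} (hk : k < N) :
    Lam ν l (k + 1) = Lam ν l k * bW l (ν ⟨k, hk⟩) := by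
  rw [Lam, take_succ_finRange hk]
  simp [Lam]

lemma monodromy_eq_Tk (ν : Fin N → ℂ) (l : ℂ) : monodromy ν l = Tk ν l N := by
  rw [monodromy, Tk]
  congr 1
  rw [List.take_of_length_le (by simp)]

lemma Lam_mu_zero (ν : Fin N → ℂ) (j : Fin N) {k : ℕ} (hjk : (j : ℕ) < k) :
    Lam ν (ν j) k = 0 := by
  apply List.prod_eq_zero
  have hmem : j ∈ (List.finRange N).take k := by
    have hlen : (j : ℕ) < ((List.finRange N).take k).length := by
      simp [List.length_take]
      omega
    have : ((List.finRange N).take k)[(j : ℕ)] = j := by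
      rw [List.getElem_take]
      simp [List.getElem_finRange]
    rw [← this]
    exact List.getElem_mem hlen
  have : bW (ν j) (ν j) = 0 := by simp [bW]
  rw [← this]
  exact List.mem_map_of_mem hmem

-- entry lemmas for Lop
lemma Lop_00 (ν : Fin N → ℂ) (P : Fin N) (l : ℂ) :
    Lop ν P l 0 0 = aW l (ν P) • siteOp P piPlus + bW l (ν P) • siteOp P piMinus := rfl
lemma Lop_01 (ν : Fin N → ℂ) (P : Fin N) (l : ℂ) :
    Lop ν P l 0 1 = siteOp P sigmaMinus := rfl
lemma Lop_10 (ν : Fin N → ℂ) (P : Fin N) (l : ℂ) :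
    Lop ν P l 1 0 = siteOp P sigmaPlus := rfl
lemma Lop_11 (ν : Fin N → ℂ) (P : Fin N) (l : ℂ) :
    Lop ν P l 1 1 = bW l (ν P) • siteOp P piPlus + aW l (ν P) • siteOp P piMinus := rfl

lemma Tk_succ_entry (ν : Fin N → ℂ) (l : ℂ) {k : ℕ} (hk : k < N) (a b : Fin 2) :
    Tk ν l (k + 1) a b
      = Lop ν ⟨k, hk⟩ l a 0 * Tk ν l k 0 b + Lop ν ⟨k, hk⟩ l a 1 * Tk ν l k 1 b := by
  rw [Tk_succ ν l hk, Matrix.mul_apply, Fin.sum_univ_two]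

-- 2x2 matrix identities
lemma piPlus_mul_sigmaMinus : piPlus * sigmaMinus = 0 := by
  ext i j; fin_cases i <;> fin_cases j <;>
    simp [piPlus, sigmaMinus, Matrix.mul_apply, Fin.sum_univ_two]
lemma piMinus_mul_sigmaMinus : piMinus * sigmaMinus = sigmaMinus := by
  ext i j; fin_cases i <;> fin_cases j <;>
    simp [piMinus, sigmaMinus, Matrix.mul_apply, Fin.sum_univ_two]
lemma sigmaPlus_mul_sigmaMinus : sigmaPlus * sigmaMinus = piPlus := by
  ext i j; fin_cases i <;> fin_cases j <;>
    simp [sigmaPlus, sigmaMinus, piPlus, Matrix.mul_apply, Fin.sum_univ_two]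
lemma sigmaMinus_mul_sigmaMinus : sigmaMinus * sigmaMinus = 0 := by
  ext i j; fin_cases i <;> fin_cases j <;>
    simp [sigmaMinus, Matrix.mul_apply, Fin.sum_univ_two]

lemma siteOp_zero (k : Fin N) : siteOp k (0 : Matrix (Fin 2) (Fin 2) ℂ) = 0 := by
  ext s s'; simp [siteOp]



lemma siteOp_mulVec_up (k : Fin N) (M : Matrix (Fin 2) (Fin 2) ℂ) (h10 : M 1 0 = 0) :
    (siteOp k M).mulVec (upVec N) = M 0 0 • upVec N := by
  funext s
  rw [upVec, basisVec, Matrix.mulVec_single_one]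
  simp only [Matrix.col_apply]
  simp only [Pi.smul_apply, smul_eq_mul]
  by_cases hs : s = upCfg N
  · subst hs
    have hcond : ∀ i, i ≠ k → upCfg N i = upCfg N i := fun _ _ => rfl
    simp only [siteOp, Matrix.of_apply, if_pos hcond]
    rw [Pi.single_apply, if_pos rfl, mul_one]
    simp [upCfg]
  · rw [Pi.single_apply, if_neg hs, mul_zero]
    by_cases hcond : ∀ i, i ≠ k → s i = upCfg N i
    · simp only [siteOp, Matrix.of_apply, if_pos hcond]
      have hsk : s k = 1 := by
        rcases fin2cases (s k) with h0 | h0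
        · exfalso
          apply hs
          funext i
          by_cases hik : i = k
          · subst hik; exact h0
          · exact hcond i hik
        · exact h0
      rw [hsk]
      exact h10
    · simp only [siteOp, Matrix.of_apply, if_neg hcond]

lemma piPlus_up (k : Fin N) : (siteOp k piPlus).mulVec (upVec N) = upVec N := by
  rw [siteOp_mulVec_up k piPlus (by simp [piPlus])]
  simp [piPlus]
lemma piMinus_up (k : Fin N) : (siteOp k piMinus).mulVec (upVec N) = 0 := by
  rw [siteOp_mulVec_up k piMinus (by simp [piMinus])]
  simp [piMinus]
lemma sigmaPlus_up (k : Fin N) : (siteOp k sigmaPlus).mulVec (upVec N) = 0 := by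
  rw [siteOp_mulVec_up k sigmaPlus (by simp [sigmaPlus])]
  simp [sigmaPlus]


-- ######## chunk 4: commutation of far siteOps with the partial monodromy

lemma commute_Lop (ν : Fin N → ℂ) {P k' : Fin N} (h : P ≠ k')
    (M : Matrix (Fin 2) (Fin 2) ℂ) (l : ℂ) (a b : Fin 2) :
    Commute (siteOp k' M) (Lop ν P l a b) := by
  rcases fin2cases a with rfl | rfl <;> rcases fin2cases b with rfl | rfl
  · rw [Lop_00]
    exact ((siteOp_comm h.symm M piPlus).smul_right _).add_right
      ((siteOp_comm h.symm M piMinus).smul_right _)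
  · rw [Lop_01]; exact siteOp_comm h.symm M sigmaMinus
  · rw [Lop_10]; exact siteOp_comm h.symm M sigmaPlus
  · rw [Lop_11]
    exact ((siteOp_comm h.symm M piPlus).smul_right _).add_right
      ((siteOp_comm h.symm M piMinus).smul_right _)

lemma Tk_comm (ν : Fin N → ℂ) (l : ℂ) :
    ∀ k : ℕ, ∀ k' : Fin N, k ≤ (k' : ℕ) →
      ∀ (M : Matrix (Fin 2) (Fin 2) ℂ) (a b : Fin 2),
        Commute (siteOp k' M) (Tk ν l k a b) := by
  intro k
  induction k with
  | zero =>
    intro k' _ M a b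
    rw [Tk_zero]
    by_cases hab : a = b
    · subst hab; rw [Matrix.one_apply_eq]; exact Commute.one_right _
    · rw [Matrix.one_apply_ne hab]; exact Commute.zero_right _
  | succ k ih =>
    intro k' hk' M a b
    have hkN : k < N := by have := k'.isLt; omega
    have hP : (⟨k, hkN⟩ : Fin N) ≠ k' := by
      intro hc
      have : k = (k' : ℕ) := congrArg Fin.val hc
      omega
    rw [Tk_succ_entry ν l hkN]
    refine Commute.add_right ?_ ?_
    · exact (commute_Lop ν hP M l a 0).mul_right (ih k' (by omega) M 0 b)
    · exact (commute_Lop ν hP M l a 1).mul_right (ih k' (by omega) M 1 b)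

/-- move a far `siteOp` through a partial-monodromy entry, at the level of vectors -/
lemma siteOp_thru (ν : Fin N → ℂ) (l : ℂ) {k : ℕ} {k' : Fin N} (hk' : k ≤ (k' : ℕ))
    (M : Matrix (Fin 2) (Fin 2) ℂ) (a b : Fin 2) (w : Cfg N → ℂ) :
    (siteOp k' M).mulVec ((Tk ν l k a b).mulVec w)
      = (Tk ν l k a b).mulVec ((siteOp k' M).mulVec w) := by
  rw [Matrix.mulVec_mulVec, Matrix.mulVec_mulVec, Tk_comm ν l k k' hk' M a b]

/-- the partial `B`, `D` (any entry) applied to the vacuum is untouched by a far `π⁺` -/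
lemma thru1 (ν : Fin N → ℂ) (l : ℂ) {k : ℕ} {k' : Fin N} (hk' : k ≤ (k' : ℕ))
    (M : Matrix (Fin 2) (Fin 2) ℂ) (h10 : M 1 0 = 0) (a b : Fin 2) :
    (siteOp k' M).mulVec ((Tk ν l k a b).mulVec (upVec N))
      = M 0 0 • (Tk ν l k a b).mulVec (upVec N) := by
  rw [siteOp_thru ν l hk' M a b, siteOp_mulVec_up k' M h10, Matrix.mulVec_smul]

lemma thru2 (ν : Fin N → ℂ) (l l' : ℂ) {k : ℕ} {k' : Fin N} (hk' : k ≤ (k' : ℕ))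
    (M : Matrix (Fin 2) (Fin 2) ℂ) (h10 : M 1 0 = 0) (a b a' b' : Fin 2) :
    (siteOp k' M).mulVec ((Tk ν l k a b).mulVec ((Tk ν l' k a' b').mulVec (upVec N)))
      = M 0 0 • (Tk ν l k a b).mulVec ((Tk ν l' k a' b').mulVec (upVec N)) := by
  rw [siteOp_thru ν l hk' M a b, thru1 ν l' hk' M h10 a' b', Matrix.mulVec_smul]

/-- vacuum eigenvalue of the partial D operator -/
lemma Dvac (ν : Fin N → ℂ) (l : ℂ) :
    ∀ k : ℕ, k ≤ N → (Tk ν l k 1 1).mulVec (upVec N) = Lam ν l k • upVec N := by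
  intro k
  induction k with
  | zero =>
    intro _
    rw [Tk_zero, Lam_zero, Matrix.one_apply_eq, Matrix.one_mulVec, one_smul]
  | succ k ih =>
    intro hk1
    have hkN : k < N := hk1
    have hk : k ≤ N := le_of_lt hkN
    set P : Fin N := ⟨k, hkN⟩
    have hkP : k ≤ (P : ℕ) := le_refl k
    rw [Tk_succ_entry ν l hkN, Lop_10, Lop_11, Matrix.add_mulVec,
      ← Matrix.mulVec_mulVec, ← Matrix.mulVec_mulVec]
    rw [siteOp_thru ν l hkP sigmaPlus 0 1, sigmaPlus_up, Matrix.mulVec_zero, zero_add]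
    rw [ih hk, Matrix.mulVec_smul, Matrix.add_mulVec, Matrix.smul_mulVec,
      Matrix.smul_mulVec, piPlus_up, piMinus_up, smul_zero, add_zero,
      Lam_succ ν l hkN]
    rw [smul_smul, mul_comm]

-- ######## chunk 5: one-site recursion formulas

lemma pp_sm_vec (P : Fin N) (w : Cfg N → ℂ) :
    (siteOp P piPlus).mulVec ((siteOp P sigmaMinus).mulVec w) = 0 := by
  rw [Matrix.mulVec_mulVec, siteOp_mul, piPlus_mul_sigmaMinus, siteOp_zero,
    Matrix.zero_mulVec]

lemma pm_sm_vec (P : Fin N) (w : Cfg N → ℂ) :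
    (siteOp P piMinus).mulVec ((siteOp P sigmaMinus).mulVec w)
      = (siteOp P sigmaMinus).mulVec w := by
  rw [Matrix.mulVec_mulVec, siteOp_mul, piMinus_mul_sigmaMinus]

lemma sp_sm_vec (P : Fin N) (w : Cfg N → ℂ) :
    (siteOp P sigmaPlus).mulVec ((siteOp P sigmaMinus).mulVec w)
      = (siteOp P piPlus).mulVec w := by
  rw [Matrix.mulVec_mulVec, siteOp_mul, sigmaPlus_mul_sigmaMinus]

lemma sm_sm_vec (P : Fin N) (w : Cfg N → ℂ) :
    (siteOp P sigmaMinus).mulVec ((siteOp P sigmaMinus).mulVec w) = 0 := by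
  rw [Matrix.mulVec_mulVec, siteOp_mul, sigmaMinus_mul_sigmaMinus, siteOp_zero,
    Matrix.zero_mulVec]

lemma B_succ_up (ν : Fin N → ℂ) (l : ℂ) {k : ℕ} (hkN : k < N) :
    (Tk ν l (k + 1) 0 1).mulVec (upVec N)
      = aW l (ν ⟨k, hkN⟩) • (Tk ν l k 0 1).mulVec (upVec N)
        + Lam ν l k • (siteOp ⟨k, hkN⟩ sigmaMinus).mulVec (upVec N) := by
  have hkP : k ≤ ((⟨k, hkN⟩ : Fin N) : ℕ) := le_refl k
  rw [Tk_succ_entry ν l hkN 0 1, Lop_00, Lop_01, Matrix.add_mulVec,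
    ← Matrix.mulVec_mulVec, ← Matrix.mulVec_mulVec, Matrix.add_mulVec,
    Matrix.smul_mulVec, Matrix.smul_mulVec,
    thru1 ν l hkP piPlus (by simp [piPlus]) 0 1,
    thru1 ν l hkP piMinus (by simp [piMinus]) 0 1,
    Dvac ν l k (le_of_lt hkN), Matrix.mulVec_smul]
  simp only [show piPlus 0 0 = (1 : ℂ) from rfl, show piMinus 0 0 = (0 : ℂ) from rfl,
    show sigmaPlus 0 0 = (0 : ℂ) from rfl]
  module

lemma Bmu_inner (ν : Fin N → ℂ) (l₁ l₂ : ℂ) {k : ℕ} (hkN : k < N) :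
    (Tk ν l₁ k 0 1).mulVec ((Tk ν l₂ (k + 1) 0 1).mulVec (upVec N))
      = aW l₂ (ν ⟨k, hkN⟩) •
          (Tk ν l₁ k 0 1).mulVec ((Tk ν l₂ k 0 1).mulVec (upVec N))
        + Lam ν l₂ k •
          (siteOp ⟨k, hkN⟩ sigmaMinus).mulVec ((Tk ν l₁ k 0 1).mulVec (upVec N)) := by
  have hkP : k ≤ ((⟨k, hkN⟩ : Fin N) : ℕ) := le_refl k
  rw [B_succ_up ν l₂ hkN, Matrix.mulVec_add, Matrix.mulVec_smul, Matrix.mulVec_smul,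
    ← siteOp_thru ν l₁ hkP sigmaMinus 0 1]

lemma Dmu_inner (ν : Fin N → ℂ) (l₁ l₂ : ℂ) {k : ℕ} (hkN : k < N) :
    (Tk ν l₁ k 1 1).mulVec ((Tk ν l₂ (k + 1) 0 1).mulVec (upVec N))
      = aW l₂ (ν ⟨k, hkN⟩) •
          (Tk ν l₁ k 1 1).mulVec ((Tk ν l₂ k 0 1).mulVec (upVec N))
        + (Lam ν l₂ k * Lam ν l₁ k) •
          (siteOp ⟨k, hkN⟩ sigmaMinus).mulVec (upVec N) := by
  have hkP : k ≤ ((⟨k, hkN⟩ : Fin N) : ℕ) := le_refl k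
  rw [B_succ_up ν l₂ hkN, Matrix.mulVec_add, Matrix.mulVec_smul, Matrix.mulVec_smul,
    ← siteOp_thru ν l₁ hkP sigmaMinus 1 1, Dvac ν l₁ k (le_of_lt hkN),
    Matrix.mulVec_smul, smul_smul]

lemma W_succ (ν : Fin N → ℂ) (l₁ l₂ : ℂ) {k : ℕ} (hkN : k < N) :
    (Tk ν l₁ (k + 1) 0 1).mulVec ((Tk ν l₂ (k + 1) 0 1).mulVec (upVec N))
      = (aW l₁ (ν ⟨k, hkN⟩) * aW l₂ (ν ⟨k, hkN⟩)) •
          (Tk ν l₁ k 0 1).mulVec ((Tk ν l₂ k 0 1).mulVec (upVec N))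
        + (bW l₁ (ν ⟨k, hkN⟩) * Lam ν l₂ k) •
          (siteOp ⟨k, hkN⟩ sigmaMinus).mulVec ((Tk ν l₁ k 0 1).mulVec (upVec N))
        + aW l₂ (ν ⟨k, hkN⟩) •
          (siteOp ⟨k, hkN⟩ sigmaMinus).mulVec
            ((Tk ν l₁ k 1 1).mulVec ((Tk ν l₂ k 0 1).mulVec (upVec N))) := by
  have hkP : k ≤ ((⟨k, hkN⟩ : Fin N) : ℕ) := le_refl k
  rw [Tk_succ_entry ν l₁ hkN 0 1, Lop_00, Lop_01, Matrix.add_mulVec,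
    ← Matrix.mulVec_mulVec, ← Matrix.mulVec_mulVec]
  rw [Bmu_inner ν l₁ l₂ hkN, Dmu_inner ν l₁ l₂ hkN]
  rw [Matrix.add_mulVec, Matrix.smul_mulVec, Matrix.smul_mulVec]
  rw [Matrix.mulVec_add, Matrix.mulVec_smul, Matrix.mulVec_smul,
    Matrix.mulVec_add, Matrix.mulVec_smul, Matrix.mulVec_smul]
  rw [thru2 ν l₁ l₂ hkP piPlus (by simp [piPlus]) 0 1 0 1,
    thru2 ν l₁ l₂ hkP piMinus (by simp [piMinus]) 0 1 0 1,
    pp_sm_vec, pm_sm_vec]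
  rw [Matrix.mulVec_add, Matrix.mulVec_smul, Matrix.mulVec_smul, sm_sm_vec]
  simp only [show piPlus 0 0 = (1 : ℂ) from rfl, show piMinus 0 0 = (0 : ℂ) from rfl,
    show sigmaPlus 0 0 = (0 : ℂ) from rfl]
  module

lemma V_succ (ν : Fin N → ℂ) (l₁ l₂ : ℂ) {k : ℕ} (hkN : k < N) :
    Lam ν l₂ (k + 1) • (Tk ν l₁ (k + 1) 0 1).mulVec (upVec N)
      + (Tk ν l₁ (k + 1) 1 1).mulVec ((Tk ν l₂ (k + 1) 0 1).mulVec (upVec N))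
      = (aW l₂ (ν ⟨k, hkN⟩) * bW l₁ (ν ⟨k, hkN⟩)) •
          (Lam ν l₂ k • (Tk ν l₁ k 0 1).mulVec (upVec N)
            + (Tk ν l₁ k 1 1).mulVec ((Tk ν l₂ k 0 1).mulVec (upVec N)))
        + ((Lam ν l₂ k * Lam ν l₁ k) * (bW l₂ (ν ⟨k, hkN⟩) + aW l₁ (ν ⟨k, hkN⟩))) •
          (siteOp ⟨k, hkN⟩ sigmaMinus).mulVec (upVec N)
        + ((bW l₂ (ν ⟨k, hkN⟩) * aW l₁ (ν ⟨k, hkN⟩) + 1 - aW l₂ (ν ⟨k, hkN⟩) * bW l₁ (ν ⟨k, hkN⟩))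
            * Lam ν l₂ k) • (Tk ν l₁ k 0 1).mulVec (upVec N) := by
  have hkP : k ≤ ((⟨k, hkN⟩ : Fin N) : ℕ) := le_refl k
  rw [Lam_succ ν l₂ hkN, B_succ_up ν l₁ hkN]
  rw [Tk_succ_entry ν l₁ hkN 1 1, Lop_10, Lop_11, Matrix.add_mulVec,
    ← Matrix.mulVec_mulVec, ← Matrix.mulVec_mulVec]
  rw [Bmu_inner ν l₁ l₂ hkN, Dmu_inner ν l₁ l₂ hkN]
  rw [Matrix.mulVec_add, Matrix.mulVec_smul, Matrix.mulVec_smul,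
    thru2 ν l₁ l₂ hkP sigmaPlus (by simp [sigmaPlus]) 0 1 0 1, sp_sm_vec,
    thru1 ν l₁ hkP piPlus (by simp [piPlus]) 0 1]
  rw [Matrix.add_mulVec, Matrix.smul_mulVec, Matrix.smul_mulVec]
  rw [Matrix.mulVec_add, Matrix.mulVec_smul, Matrix.mulVec_smul,
    Matrix.mulVec_add, Matrix.mulVec_smul, Matrix.mulVec_smul]
  rw [thru2 ν l₁ l₂ hkP piPlus (by simp [piPlus]) 1 1 0 1,
    thru2 ν l₁ l₂ hkP piMinus (by simp [piMinus]) 1 1 0 1,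
    pp_sm_vec, pm_sm_vec]
  simp only [show piPlus 0 0 = (1 : ℂ) from rfl, show piMinus 0 0 = (0 : ℂ) from rfl,
    show sigmaPlus 0 0 = (0 : ℂ) from rfl]
  module

-- ######## chunk 6: the two vanishing inductions and the theorem

lemma Vlem (ν : Fin N → ℂ) (j : Fin N) :
    ∀ k : ℕ, k ≤ N → (j : ℕ) < k →
      Lam ν (ν j - 1) k • (Tk ν (ν j) k 0 1).mulVec (upVec N)
        + (Tk ν (ν j) k 1 1).mulVec ((Tk ν (ν j - 1) k 0 1).mulVec (upVec N)) = 0 := by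
  intro k
  induction k with
  | zero => intro _ h; omega
  | succ k ih =>
    intro hk1 hj
    have hkN : k < N := hk1
    rw [V_succ ν (ν j) (ν j - 1) hkN]
    rcases Nat.lt_succ_iff_lt_or_eq.mp hj with hlt | heq
    · have hbracket : bW (ν j - 1) (ν ⟨k, hkN⟩) * aW (ν j) (ν ⟨k, hkN⟩) + 1
          - aW (ν j - 1) (ν ⟨k, hkN⟩) * bW (ν j) (ν ⟨k, hkN⟩) = 0 := by
        simp only [aW, bW]; ring
      rw [ih (le_of_lt hkN) hlt, smul_zero, Lam_mu_zero ν j hlt]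
      simp [hbracket]
    · have hP : (⟨k, hkN⟩ : Fin N) = j := Fin.val_injective heq.symm
      rw [hP]
      have h1 : aW (ν j - 1) (ν j) = 0 := by simp only [aW]; ring
      have h2 : bW (ν j - 1) (ν j) + aW (ν j) (ν j) = 0 := by simp only [aW, bW]; ring
      have h3 : bW (ν j - 1) (ν j) * aW (ν j) (ν j) + 1
          - aW (ν j - 1) (ν j) * bW (ν j) (ν j) = 0 := by
        simp only [aW, bW]; ring
      rw [h3, h1, h2]
      simp

lemma Wlem (ν : Fin N → ℂ) (j : Fin N) :
    ∀ k : ℕ, k ≤ N → (j : ℕ) < k →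
      (Tk ν (ν j) k 0 1).mulVec ((Tk ν (ν j - 1) k 0 1).mulVec (upVec N)) = 0 := by
  intro k
  induction k with
  | zero => intro _ h; omega
  | succ k ih =>
    intro hk1 hj
    have hkN : k < N := hk1
    rw [W_succ ν (ν j) (ν j - 1) hkN]
    rcases Nat.lt_succ_iff_lt_or_eq.mp hj with hlt | heq
    · have hab : aW (ν j - 1) (ν ⟨k, hkN⟩) = bW (ν j) (ν ⟨k, hkN⟩) := by
        simp only [aW, bW]; ring
      have hv := Vlem ν j k (le_of_lt hkN) hlt
      rw [ih (le_of_lt hkN) hlt, smul_zero, zero_add, hab, mul_smul,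
        ← Matrix.mulVec_smul, ← smul_add, ← Matrix.mulVec_add, hv,
        Matrix.mulVec_zero, smul_zero]
    · have hP : (⟨k, hkN⟩ : Fin N) = j := Fin.val_injective heq.symm
      rw [hP]
      have h1 : aW (ν j - 1) (ν j) = 0 := by simp only [aW]; ring
      have h4 : bW (ν j) (ν j) = 0 := by simp only [bW]; ring
      rw [h1, h4]
      simp

end SixVertex
end

open SixVertex in
/-- for pairwise distinct `ν`, the vector `B(ν_j) B(ν_j - 1) |⇑⟩` is zero. -/
theorem nullBetheVec (N : ℕ) (hN : 1 ≤ N) (ν : Fin N → ℂ)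
    (hν : Function.Injective ν) (j : Fin N) :
    (Bop ν (ν j)).mulVec ((Bop ν (ν j - 1)).mulVec (upVec N)) = 0 := by
  show ((monodromy ν (ν j)) 0 1).mulVec (((monodromy ν (ν j - 1)) 0 1).mulVec (upVec N)) = 0
  rw [monodromy_eq_Tk, monodromy_eq_Tk]
  exact Wlem ν j N (le_refl N) j.isLt
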